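/- Let X, M̂, Y be normalized automata over A and S with converging behaviors x := ⟦X⟧, m := ⟦M̂⟧, y := ⟦Y⟧ (all proper since the automata are normalized). Then the bidiverging behavior of the conjoin X ⋆ M̂ ⋆ Y equals the conjoin of the behaviors: for every biinfinite word w, every i ∈ ℤ and every n ∈ ℕ, (X ⋆ M̂ ⋆ Y)(w,i,n) = (x*·m·y*)(w[i..i+n))·χ_ζ(w,x*·m·y*). -/

import Mathlib

open scoped Classical

/-- A weighted automaton over alphabet `A` and semiring `S`: a finite set of
states `Q`, initial distribution `I`, final distribution `F`, and a transition
matrix `M a` for each letter `a`. -/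
structure WA (A : Type) (S : Type) [Semiring S] where
  Q : Type
  [fin : Fintype Q]
  [deq : DecidableEq Q]
  I : Q → S
  F : Q → S
  M : A → Matrix Q Q S

attribute [instance] WA.fin WA.deq

variable {A S : Type} [Semiring S]

/-- The product `M(a₀)·…·M(a_{n−1})` over a finite word (identity for `[]`). -/
def Mword (𝒜 : WA A S) (w : List A) : Matrix 𝒜.Q 𝒜.Q S :=
  (w.map 𝒜.M).prod

/-- The converging behavior `⟦𝒜⟧(w) = Σ_{i,f} I(i)·M(w)_{i,f}·F(f)`. -/
def convB (𝒜 : WA A S) (w : List A) : S :=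
  ∑ i, ∑ f, 𝒜.I i * Mword 𝒜 w i f * 𝒜.F f

/-- The first `n` letters of an infinite word. -/
def wpre (w : ℕ → A) (n : ℕ) : List A := (List.range n).map w

/-- A pair of states `(i,f)` is activated by the infinite word `w` if for
every `n₀` there is `n ≥ n₀` with `M(w[0..n))_{i,f} ≠ 0`. -/
def Activated (𝒜 : WA A S) (w : ℕ → A) (i f : 𝒜.Q) : Prop :=
  ∀ n₀ : ℕ, ∃ n, n₀ ≤ n ∧ Mword 𝒜 (wpre w n) i f ≠ 0

/-- The diverging behavior `𝒜(w,n) = Σ_{(i,f) activated} I(i)·M(w[0..n))_{i,f}·F(f)`. -/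
noncomputable def divB (𝒜 : WA A S) (w : ℕ → A) (n : ℕ) : S :=
  ∑ p : 𝒜.Q × 𝒜.Q,
    if Activated 𝒜 w p.1 p.2 then
      𝒜.I p.1 * Mword 𝒜 (wpre w n) p.1 p.2 * 𝒜.F p.2
    else 0

/-- Product of converging power series: sum over all splittings of the word. -/
def cmul (x y : List A → S) : List A → S :=
  fun w => ∑ k ∈ Finset.range (w.length + 1), x (w.take k) * y (w.drop k)

/-- The multiplicative unit: 1 on the empty word, 0 elsewhere. -/
def cone : List A → S := fun w => match w with | [] => 1 | _ => 0

/-- Powers of a converging power series. -/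
def cpow (x : List A → S) : ℕ → (List A → S)
  | 0 => cone
  | n + 1 => cmul x (cpow x n)

/-- The star `x* = Σ_{k ≥ 0} x^k`; for proper `x` only the terms with
`k ≤ |w|` can contribute on the word `w`. -/
def cstar (x : List A → S) : List A → S :=
  fun w => ∑ k ∈ Finset.range (w.length + 1), cpow x k w

/-- `Rat*(S,A)`: the smallest set of converging power series containing all
finitely supported ones and closed under sum, product, and star of proper
members. -/
inductive IsRat : (List A → S) → Prop
  | finite (x : List A → S) (h : (Function.support x).Finite) : IsRat x
  | add {x y : List A → S} : IsRat x → IsRat y → IsRat (x + y)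
  | mul {x y : List A → S} : IsRat x → IsRat y → IsRat (cmul x y)
  | star {x : List A → S} : IsRat x → x [] = 0 → IsRat (cstar x)

/-- `χ(w,x) = 1` iff arbitrarily long prefixes of `w` have nonzero coefficient. -/
noncomputable def chi (w : ℕ → A) (x : List A → S) : S :=
  if ∀ n₀ : ℕ, ∃ n, n₀ ≤ n ∧ x (wpre w n) ≠ 0 then 1 else 0

/-- `s^ω(w,n) = s*(w[0..n))·χ(w,s*)`. -/
noncomputable def omegaPS (s : List A → S) : (ℕ → A) → ℕ → S :=
  fun w n => cstar s (wpre w n) * chi w (cstar s)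

/-- The conjoin `(x ⋆ y)(w,n) = (x·y*)(w[0..n))·χ(w,x·y*)`. -/
noncomputable def conjoinPS (x y : List A → S) : (ℕ → A) → ℕ → S :=
  fun w n => cmul x (cstar y) (wpre w n) * chi w (cmul x (cstar y))

/-- `Rat^ω(S,A)`: the smallest set of diverging power series closed under
finite sums and left/right scalar multiplication containing all `x ⋆ y` and
`z^ω` for proper rational `x`, `y`, `z`. -/
inductive IsRatOmega : ((ℕ → A) → ℕ → S) → Prop
  | zero : IsRatOmega (fun _ _ => 0)
  | add {p q : (ℕ → A) → ℕ → S} :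
      IsRatOmega p → IsRatOmega q → IsRatOmega (fun w n => p w n + q w n)
  | smul_left (s : S) {p : (ℕ → A) → ℕ → S} :
      IsRatOmega p → IsRatOmega (fun w n => s * p w n)
  | smul_right (s : S) {p : (ℕ → A) → ℕ → S} :
      IsRatOmega p → IsRatOmega (fun w n => p w n * s)
  | conjoin {x y : List A → S} :
      IsRat x → x [] = 0 → IsRat y → y [] = 0 → IsRatOmega (conjoinPS x y)
  | omega {z : List A → S} : IsRat z → z [] = 0 → IsRatOmega (omegaPS z)

/-- Scalar multiples `l·𝒜·r` of an automaton. -/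
def smulWA (l : S) (𝒜 : WA A S) (r : S) : WA A S where
  Q := 𝒜.Q
  I := fun i => l * 𝒜.I i
  F := fun f => 𝒜.F f * r
  M := 𝒜.M

/-- The disjoint-union (sum) automaton. -/
def addWA (𝒜 ℬ : WA A S) : WA A S where
  Q := 𝒜.Q ⊕ ℬ.Q
  I := Sum.elim 𝒜.I ℬ.I
  F := Sum.elim 𝒜.F ℬ.F
  M := fun a => Matrix.fromBlocks (𝒜.M a) 0 0 (ℬ.M a)

/-- `𝒜` is normalized with initial state `qI` and final state `qF`. -/
def IsNormalizedAt (𝒜 : WA A S) (qI qF : 𝒜.Q) : Prop :=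
  qI ≠ qF ∧ (∀ i, 𝒜.I i = if i = qI then 1 else 0) ∧
    (∀ f, 𝒜.F f = if f = qF then 1 else 0) ∧
    (∀ (a : A) (i : 𝒜.Q), 𝒜.M a i qI = 0) ∧ (∀ (a : A) (j : 𝒜.Q), 𝒜.M a qF j = 0)

/-- `𝒜` is normalized. -/
def IsNormalized (𝒜 : WA A S) : Prop := ∃ qI qF, IsNormalizedAt 𝒜 qI qF

/-- `𝒜` is a loopback automaton with loopback state `q₀`. -/
def IsLoopbackAt (𝒜 : WA A S) (q₀ : 𝒜.Q) : Prop :=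
  (∀ i, 𝒜.I i = if i = q₀ then 1 else 0) ∧ (∀ f, 𝒜.F f = if f = q₀ then 1 else 0)

/-- `𝒜` is a loopback automaton. -/
def IsLoopback (𝒜 : WA A S) : Prop := ∃ q₀, IsLoopbackAt 𝒜 q₀

/-- `𝒜` is a loopback automaton with prelude. -/
def IsLoopbackWithPrelude (𝒜 : WA A S) : Prop :=
  ∃ qI qF, qI ≠ qF ∧ (∀ i, 𝒜.I i = if i = qI then 1 else 0) ∧
    (∀ f, 𝒜.F f = if f = qF then 1 else 0) ∧
    (∀ (a : A) (i : 𝒜.Q), 𝒜.M a i qI = 0)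

/-- `𝒜` is a bridge automaton. -/
def IsBridge (𝒜 : WA A S) : Prop :=
  ∃ qI qF, qI ≠ qF ∧ (∀ i, 𝒜.I i = if i = qI then 1 else 0) ∧
    (∀ f, 𝒜.F f = if f = qF then 1 else 0)

/-- The unroll of a loopback automaton with loopback state `q₀`: adjoin a
fresh final state, redirect all edges ending at `q₀` to it. -/
def unroll (L : WA A S) (q₀ : L.Q) : WA A S where
  Q := L.Q ⊕ Unit
  I := Sum.elim (fun i => if i = q₀ then 1 else 0) (fun _ => 0)
  F := Sum.elim (fun _ => 0) (fun _ => 1)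
  M := fun a => Matrix.of fun p q =>
    match p, q with
    | Sum.inl i, Sum.inl j => if j = q₀ then 0 else L.M a i j
    | Sum.inl i, Sum.inr _ => L.M a i q₀
    | Sum.inr _, _ => 0

/-- The conjoin `X ⋆ Y` of two normalized automata (initial/final states
`xI`, `xF` and `yI`, `yF`): the disjoint sum of `X` minus its final state and
the roll of `Y`, with edges of `X` ending at `xF` redirected to the loopback
state `yI`. -/
def conjoinWA (X : WA A S) (xI xF : X.Q) (Y : WA A S) (yI yF : Y.Q) : WA A S where
  Q := {i : X.Q // i ≠ xF} ⊕ {j : Y.Q // j ≠ yF}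
  I := Sum.elim (fun i => if i.1 = xI then 1 else 0) (fun _ => 0)
  F := Sum.elim (fun _ => 0) (fun j => if j.1 = yI then 1 else 0)
  M := fun a => Matrix.of fun p q =>
    match p, q with
    | Sum.inl i, Sum.inl j => X.M a i.1 j.1
    | Sum.inl i, Sum.inr j => if j.1 = yI then X.M a i.1 xF else 0
    | Sum.inr _, Sum.inl _ => 0
    | Sum.inr i, Sum.inr j => if j.1 = yI then Y.M a i.1 yF else Y.M a i.1 j.1

/-- The finite slice `w[i..j)` of a biinfinite word. -/
def bpre (w : ℤ → A) (i j : ℤ) : List A :=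
  (List.range (j - i).toNat).map (fun k => w (i + k))

/-- A pair of states `(p,q)` is activated by the biinfinite word `w` if for
all `i₀ ≤ j₀` there are `i ≤ i₀` and `j ≥ j₀` with `M(w[i..j))_{p,q} ≠ 0`. -/
def BActivated (𝒜 : WA A S) (w : ℤ → A) (p q : 𝒜.Q) : Prop :=
  ∀ i₀ j₀ : ℤ, i₀ ≤ j₀ → ∃ i ≤ i₀, ∃ j, j₀ ≤ j ∧ Mword 𝒜 (bpre w i j) p q ≠ 0

/-- The bidiverging behavior
`𝒜(w,i,n) = Σ_{(p,q) activated} I(p)·M(w[i..i+n))_{p,q}·F(q)`. -/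
noncomputable def bdivB (𝒜 : WA A S) (w : ℤ → A) (i : ℤ) (n : ℕ) : S :=
  ∑ p : 𝒜.Q × 𝒜.Q,
    if BActivated 𝒜 w p.1 p.2 then
      𝒜.I p.1 * Mword 𝒜 (bpre w i (i + n)) p.1 p.2 * 𝒜.F p.2
    else 0

/-- `χ_ζ(w,x) = 1` iff arbitrarily long slices of `w` have nonzero coefficient. -/
noncomputable def chiZ (w : ℤ → A) (x : List A → S) : S :=
  if ∀ i₀ j₀ : ℤ, i₀ ≤ j₀ → ∃ i ≤ i₀, ∃ j, j₀ ≤ j ∧ x (bpre w i j) ≠ 0 then 1 else 0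

/-- `s^ζ(w,i,n) = s*(w[i..i+n))·χ_ζ(w,s*)`. -/
noncomputable def zetaPS (s : List A → S) : (ℤ → A) → ℤ → ℕ → S :=
  fun w i n => cstar s (bpre w i (i + n)) * chiZ w (cstar s)

/-- The conjoin `(x ⋆ m ⋆ y)(w,i,n) = (x*·m·y*)(w[i..i+n))·χ_ζ(w,x*·m·y*)`. -/
noncomputable def conjoin3PS (x m y : List A → S) : (ℤ → A) → ℤ → ℕ → S :=
  fun w i n =>
    cmul (cstar x) (cmul m (cstar y)) (bpre w i (i + n)) *
      chiZ w (cmul (cstar x) (cmul m (cstar y)))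

/-- `Rat^ζ(S,A)`: the smallest set of bidiverging power series closed under
finite sums and left/right scalar multiplication containing all `x ⋆ m ⋆ y`
and `z^ζ` for proper rational `x`, `m`, `y`, `z`. -/
inductive IsRatZeta : ((ℤ → A) → ℤ → ℕ → S) → Prop
  | zero : IsRatZeta (fun _ _ _ => 0)
  | add {p q : (ℤ → A) → ℤ → ℕ → S} :
      IsRatZeta p → IsRatZeta q → IsRatZeta (fun w i n => p w i n + q w i n)
  | smul_left (s : S) {p : (ℤ → A) → ℤ → ℕ → S} :
      IsRatZeta p → IsRatZeta (fun w i n => s * p w i n)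
  | smul_right (s : S) {p : (ℤ → A) → ℤ → ℕ → S} :
      IsRatZeta p → IsRatZeta (fun w i n => p w i n * s)
  | conjoin {x m y : List A → S} :
      IsRat x → x [] = 0 → IsRat m → m [] = 0 → IsRat y → y [] = 0 →
      IsRatZeta (conjoin3PS x m y)
  | zeta {z : List A → S} : IsRat z → z [] = 0 → IsRatZeta (zetaPS z)

/-- The conjoin `X ⋆ M̂ ⋆ Y` of three normalized automata: the roll of `X`
(loopback `xI`), the middle of `M̂`, and the roll of `Y` (loopback `yI`), with
the edges of `M̂` leaving `mI` re-sourced at `xI`, the edges of `M̂` entering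
`mF` re-targeted at `yI`, and direct `mI → mF` edges becoming `xI → yI`. -/
def conjoin3WA (X : WA A S) (xI xF : X.Q) (Mh : WA A S) (mI mF : Mh.Q)
    (Y : WA A S) (yI yF : Y.Q) : WA A S where
  Q := {i : X.Q // i ≠ xF} ⊕ ({k : Mh.Q // k ≠ mI ∧ k ≠ mF} ⊕ {j : Y.Q // j ≠ yF})
  I := Sum.elim (fun i => if i.1 = xI then 1 else 0) (fun _ => 0)
  F := Sum.elim (fun _ => 0) (Sum.elim (fun _ => 0) (fun j => if j.1 = yI then 1 else 0))
  M := fun a => Matrix.of fun p q =>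
    match p, q with
    | Sum.inl i, Sum.inl j => if j.1 = xI then X.M a i.1 xF else X.M a i.1 j.1
    | Sum.inl i, Sum.inr (Sum.inl k) => if i.1 = xI then Mh.M a mI k.1 else 0
    | Sum.inl i, Sum.inr (Sum.inr j) =>
        if i.1 = xI ∧ j.1 = yI then Mh.M a mI mF else 0
    | Sum.inr (Sum.inl _), Sum.inl _ => 0
    | Sum.inr (Sum.inl k), Sum.inr (Sum.inl l) => Mh.M a k.1 l.1
    | Sum.inr (Sum.inl k), Sum.inr (Sum.inr j) => if j.1 = yI then Mh.M a k.1 mF else 0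
    | Sum.inr (Sum.inr _), Sum.inl _ => 0
    | Sum.inr (Sum.inr _), Sum.inr (Sum.inl _) => 0
    | Sum.inr (Sum.inr i), Sum.inr (Sum.inr j) =>
        if j.1 = yI then Y.M a i.1 yF else Y.M a i.1 j.1


/-! ### Auxiliary machinery for the proof -/

def fword (𝒜 : WA A S) (p q : 𝒜.Q) : List A → S := fun v => Mword 𝒜 v p q

lemma Mword_nil' (𝒜 : WA A S) : Mword 𝒜 [] = 1 := rfl

lemma Mword_cons' (𝒜 : WA A S) (a : A) (w : List A) :
    Mword 𝒜 (a :: w) = 𝒜.M a * Mword 𝒜 w := by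
  simp [Mword, List.map_cons, List.prod_cons]

lemma Mword_cons_apply (𝒜 : WA A S) (a : A) (w : List A) (p r : 𝒜.Q) :
    Mword 𝒜 (a :: w) p r = ∑ q, 𝒜.M a p q * Mword 𝒜 w q r := by
  rw [Mword_cons', Matrix.mul_apply]

lemma cmul_nil (f g : List A → S) : cmul f g [] = f [] * g [] := by
  simp [cmul]

lemma cmul_cone_left (g : List A → S) (w : List A) : cmul cone g w = g w := by
  cases w with
  | nil => simp [cmul, cone]
  | cons a w =>
      rw [cmul, List.length_cons, Finset.sum_range_succ']
      simp [cone]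

lemma fword_nil (𝒜 : WA A S) (p r : 𝒜.Q) :
    fword 𝒜 p r [] = if p = r then 1 else 0 := by
  simp [fword, Mword_nil', Matrix.one_apply]

lemma fword_noexit (𝒜 : WA A S) (q : 𝒜.Q) (h : ∀ (a : A) (j : 𝒜.Q), 𝒜.M a q j = 0) :
    fword 𝒜 q q = cone := by
  funext w
  cases w with
  | nil => simp [fword, Mword_nil', Matrix.one_apply, cone]
  | cons a w => simp [fword, Mword_cons_apply, h, cone]

lemma cmul_cons (f g : List A → S) (hf : f [] = 0) (a : A) (w : List A) :
    cmul f g (a :: w) =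
      ∑ k ∈ Finset.range (w.length + 1), f (a :: w.take k) * g (w.drop k) := by
  rw [cmul, List.length_cons, Finset.sum_range_succ']
  simp [hf, List.take_succ_cons, List.drop_succ_cons]

lemma cmul_fword_cons (𝒜 : WA A S) (p r : 𝒜.Q) (hp : p ≠ r) (g : List A → S)
    (a : A) (w : List A) :
    cmul (fword 𝒜 p r) g (a :: w)
      = ∑ q, 𝒜.M a p q * cmul (fword 𝒜 q r) g w := by
  rw [cmul_cons _ _ (by simp [fword_nil, hp]) a w]
  have h1 : ∀ k, fword 𝒜 p r (a :: w.take k) = ∑ q, 𝒜.M a p q * Mword 𝒜 (w.take k) q r :=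
    fun k => Mword_cons_apply 𝒜 a _ p r
  simp only [h1, Finset.sum_mul]
  rw [Finset.sum_comm]
  simp [cmul, fword, Finset.mul_sum, mul_assoc]

lemma cpow_big (x : List A → S) (hx : x [] = 0) :
    ∀ (k : ℕ) (w : List A), w.length < k → cpow x k w = 0 := by
  intro k
  induction k with
  | zero => intro w hw; omega
  | succ k ih =>
      intro w hw
      rw [cpow, cmul]
      apply Finset.sum_eq_zero
      intro j hj
      have hj' := Finset.mem_range.1 hj
      rcases Nat.eq_zero_or_pos j with h0 | h0
      · simp [h0, hx]
      · rw [ih (w.drop j) (by simp; omega), mul_zero]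

lemma cstar_rec (x : List A → S) (hx : x [] = 0) (w : List A) :
    cstar x w = cone w + cmul x (cstar x) w := by
  rw [cstar, Finset.sum_range_succ']
  rw [add_comm]
  congr 1
  · show ∑ k ∈ Finset.range w.length, cmul x (cpow x k) w = _
    simp only [cmul]
    rw [Finset.sum_comm]
    apply Finset.sum_congr rfl
    intro j hj
    have hj' := Finset.mem_range.1 hj
    rcases Nat.eq_zero_or_pos j with h0 | h0
    · simp only [h0, List.take_zero, hx, zero_mul]
      simp
    · rw [← Finset.mul_sum]
      congr 1
      rw [cstar, List.length_drop]
      refine (Finset.sum_subset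
        (Finset.range_subset_range.2 (show w.length - j + 1 ≤ w.length by omega)) ?_).symm
      intro k _ hk
      exact cpow_big x hx k _ (by simp [Finset.mem_range] at hk ⊢; omega)

lemma range_filter_le (k n : ℕ) (hk : k ≤ n) :
    (Finset.range (n+1)).filter (fun l => l ≤ k) = Finset.range (k+1) := by
  ext l; simp [Nat.lt_succ_iff]; omega

lemma range_filter_ge (l n : ℕ) :
    (Finset.range (n+1)).filter (fun k => l ≤ k) = Finset.Ico l (n+1) := by
  ext k; simp [Nat.lt_succ_iff, and_comm]

lemma cmul_assoc' (f g h : List A → S) (w : List A) :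
    cmul (cmul f g) h w = cmul f (cmul g h) w := by
  rw [cmul, cmul]
  calc
    ∑ k ∈ Finset.range (w.length + 1), cmul f g (w.take k) * h (w.drop k)
        = ∑ k ∈ Finset.range (w.length + 1), ∑ l ∈ Finset.range (w.length + 1),
            (if l ≤ k then f (w.take l) * (g ((w.drop l).take (k - l)) * h (w.drop k))
             else 0) := by
          apply Finset.sum_congr rfl
          intro k hk
          have hk' : k ≤ w.length := Nat.lt_succ_iff.1 (Finset.mem_range.1 hk)
          rw [← Finset.sum_filter, range_filter_le k w.length hk', cmul, Finset.sum_mul,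
            List.length_take, min_eq_left hk']
          apply Finset.sum_congr rfl
          intro l hl
          have hl' : l ≤ k := Nat.lt_succ_iff.1 (Finset.mem_range.1 hl)
          rw [List.take_take, min_eq_left hl', List.drop_take, mul_assoc]
    _ = ∑ l ∈ Finset.range (w.length + 1), ∑ k ∈ Finset.range (w.length + 1),
            (if l ≤ k then f (w.take l) * (g ((w.drop l).take (k - l)) * h (w.drop k))
             else 0) := Finset.sum_comm
    _ = ∑ l ∈ Finset.range (w.length + 1), f (w.take l) * cmul g h (w.drop l) := by
          apply Finset.sum_congr rfl
          intro l hl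
          have hl' : l ≤ w.length := Nat.lt_succ_iff.1 (Finset.mem_range.1 hl)
          rw [← Finset.sum_filter, range_filter_ge l w.length, Finset.sum_Ico_eq_sum_range,
            cmul, List.length_drop, Finset.mul_sum,
            show w.length + 1 - l = (w.length - l) + 1 by omega]
          apply Finset.sum_congr rfl
          intro j hj
          simp [List.drop_drop]

lemma cmul_star_left (x g : List A → S) (hx : x [] = 0) (w : List A) :
    cmul (cstar x) g w = g w + cmul x (cmul (cstar x) g) w := by
  conv_lhs => rw [cmul]
  rw [Finset.sum_congr rfl (fun k _ => by rw [cstar_rec x hx, add_mul]),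
      Finset.sum_add_distrib]
  congr 1
  · exact cmul_cone_left g w
  · exact cmul_assoc' x (cstar x) g w

lemma sum_erase_swap {α : Type} [Fintype α] [DecidableEq α] (T : α → S) (a b : α)
    (hab : a ≠ b) (hTa : T a = 0) :
    ∑ x ∈ Finset.univ.erase b, (if x = a then T b else T x) = ∑ x, T x := by
  have ha : a ∈ Finset.univ.erase b := Finset.mem_erase.2 ⟨hab, Finset.mem_univ a⟩
  rw [← Finset.add_sum_erase _ _ ha, if_pos rfl,
    Finset.sum_congr rfl (fun x hx => if_neg (Finset.mem_erase.1 hx).1),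
    show (Finset.univ.erase b).erase a = (Finset.univ.erase a).erase b by
      ext x; simp; tauto]
  have hb : b ∈ Finset.univ.erase a := Finset.mem_erase.2 ⟨hab.symm, Finset.mem_univ b⟩
  rw [Finset.add_sum_erase _ _ hb]
  have h2 := Finset.add_sum_erase Finset.univ T (Finset.mem_univ a)
  rw [← h2, hTa, zero_add]

lemma sum_subtype_swap {α : Type} [Fintype α] [DecidableEq α] (T : α → S) (a b : α)
    (hab : a ≠ b) (hTa : T a = 0) :
    (∑ x : {x : α // x ≠ b}, if x.1 = a then T b else T x.1) = ∑ x, T x :=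
  ((Finset.sum_subtype (p := fun x => x ≠ b) (Finset.univ.erase b) (fun x => by simp)
    (fun x => if x = a then T b else T x)).symm).trans (sum_erase_swap T a b hab hTa)

lemma sum_subtype_pair {α : Type} [Fintype α] [DecidableEq α] (T : α → S) (a b : α)
    (hab : a ≠ b) (hTa : T a = 0) :
    (∑ x : {x : α // x ≠ a ∧ x ≠ b}, T x.1) + T b = ∑ x, T x := by
  have h1 : (∑ x : {x : α // x ≠ a ∧ x ≠ b}, T x.1)
      = ∑ x ∈ (Finset.univ.erase a).erase b, T x :=
    (Finset.sum_subtype (p := fun x => x ≠ a ∧ x ≠ b) _ (fun x => by simp; tauto) T).symm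
  rw [h1, add_comm]
  have hb : b ∈ Finset.univ.erase a := Finset.mem_erase.2 ⟨hab.symm, Finset.mem_univ b⟩
  rw [Finset.add_sum_erase _ _ hb]
  have h2 := Finset.add_sum_erase Finset.univ T (Finset.mem_univ a)
  rw [← h2, hTa, zero_add]

lemma sum_subtype_single {α : Type} [Fintype α] [DecidableEq α] (b yv : α)
    (hne : yv ≠ b) (c : S) :
    (∑ x : {x : α // x ≠ b}, if x.1 = yv then c else 0) = c := by
  have h1 : (∑ x : {x : α // x ≠ b}, if x.1 = yv then c else 0)
      = ∑ x ∈ Finset.univ.erase b, (if x = yv then c else 0) :=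
    (Finset.sum_subtype (p := fun x => x ≠ b) _ (fun x => by simp)
      (fun x => if x = yv then c else 0)).symm
  rw [h1, Finset.sum_ite_eq' (Finset.univ.erase b) yv (fun _ => c),
    if_pos (Finset.mem_erase.2 ⟨hne, Finset.mem_univ yv⟩)]

lemma convB_normalizedAt (𝒜 : WA A S) (qI qF : 𝒜.Q) (h : IsNormalizedAt 𝒜 qI qF) :
    convB 𝒜 = fword 𝒜 qI qF := by
  obtain ⟨hne, hI, hF, _, _⟩ := h
  funext u
  simp [convB, fword, hI, hF]

lemma conjoin3_main (X : WA A S) (xI xF : X.Q) (Mh : WA A S) (mI mF : Mh.Q)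
    (Y : WA A S) (yI yF : Y.Q)
    (hxne : xI ≠ xF) (hxMI : ∀ (a : A) (i : X.Q), X.M a i xI = 0)
    (hxMF : ∀ (a : A) (j : X.Q), X.M a xF j = 0)
    (hmne : mI ≠ mF) (hmMI : ∀ (a : A) (i : Mh.Q), Mh.M a i mI = 0)
    (hmMF : ∀ (a : A) (j : Mh.Q), Mh.M a mF j = 0)
    (hyne : yI ≠ yF) (hyMI : ∀ (a : A) (i : Y.Q), Y.M a i yI = 0)
    (hyMF : ∀ (a : A) (j : Y.Q), Y.M a yF j = 0) :
    ∀ u : List A,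
      (∀ i : {i : X.Q // i ≠ xF},
        Mword (conjoin3WA X xI xF Mh mI mF Y yI yF) u (Sum.inl i)
            (Sum.inr (Sum.inr ⟨yI, hyne⟩))
          = cmul (fword X i.1 xF)
              (cmul (cstar (fword X xI xF))
                (cmul (fword Mh mI mF) (cstar (fword Y yI yF)))) u
            + (if i.1 = xI then
                cmul (fword Mh mI mF) (cstar (fword Y yI yF)) u else 0))
      ∧ (∀ k : {k : Mh.Q // k ≠ mI ∧ k ≠ mF},
        Mword (conjoin3WA X xI xF Mh mI mF Y yI yF) u (Sum.inr (Sum.inl k))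
            (Sum.inr (Sum.inr ⟨yI, hyne⟩))
          = cmul (fword Mh k.1 mF) (cstar (fword Y yI yF)) u)
      ∧ (∀ j : {j : Y.Q // j ≠ yF},
        Mword (conjoin3WA X xI xF Mh mI mF Y yI yF) u (Sum.inr (Sum.inr j))
            (Sum.inr (Sum.inr ⟨yI, hyne⟩))
          = cmul (fword Y j.1 yF) (cstar (fword Y yI yF)) u
            + (if j.1 = yI then cone u else 0)) := by
  have hx0 : fword X xI xF [] = 0 := by rw [fword_nil]; exact if_neg hxne
  have hm0 : fword Mh mI mF [] = 0 := by rw [fword_nil]; exact if_neg hmne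
  have hy0 : fword Y yI yF [] = 0 := by rw [fword_nil]; exact if_neg hyne
  have hXF := fword_noexit X xF hxMF
  have hMF := fword_noexit Mh mF hmMF
  have hYF := fword_noexit Y yF hyMF
  set C := conjoin3WA X xI xF Mh mI mF Y yI yF with hC
  set four : C.Q := Sum.inr (Sum.inr ⟨yI, hyne⟩) with hfourdef
  set xw := fword X xI xF with hxw
  set mw := fword Mh mI mF with hmw
  set yw := fword Y yI yF with hywdef
  set ys := cstar yw with hys
  set z := cmul (cstar xw) (cmul mw ys) with hz
  have hzrec : ∀ v, z v = cmul mw ys v + cmul xw z v :=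
    fun v => cmul_star_left xw (cmul mw ys) hx0 v
  have hyrec : ∀ v, ys v = cone v + cmul yw ys v := fun v => cstar_rec yw hy0 v
  have split : ∀ f : C.Q → S,
      ∑ q, f q = (∑ i' : {i : X.Q // i ≠ xF}, f (Sum.inl i'))
        + ((∑ k : {k : Mh.Q // k ≠ mI ∧ k ≠ mF}, f (Sum.inr (Sum.inl k)))
          + (∑ j : {j : Y.Q // j ≠ yF}, f (Sum.inr (Sum.inr j)))) := by
    intro f
    have h1 := Fintype.sum_sum_type f
    have h2 := Fintype.sum_sum_type (fun q => f (Sum.inr q))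
    rw [h2] at h1
    exact h1
  intro u
  induction u with
  | nil =>
      refine ⟨fun i => ?_, fun k => ?_, fun j => ?_⟩
      · erw [Mword_nil', Matrix.one_apply, if_neg (by simp [hfourdef])]
        rw [cmul_nil, fword_nil, if_neg i.2, zero_mul, cmul_nil,
          show mw [] = (0 : S) from hm0, zero_mul, zero_add]
        simp
      · erw [Mword_nil', Matrix.one_apply, if_neg (by simp [hfourdef])]
        rw [cmul_nil, fword_nil, if_neg k.2.2, zero_mul]
      · erw [Mword_nil', Matrix.one_apply, cmul_nil, fword_nil, if_neg j.2, zero_mul, zero_add]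
        by_cases hj : j.1 = yI
        · have hj' : j = ⟨yI, hyne⟩ := Subtype.ext hj
          erw [if_pos hj, if_pos (show (Sum.inr (Sum.inr j) : C.Q) = four by rw [hfourdef, hj'])]
          rfl
        · erw [if_neg hj, if_neg (show ¬ (Sum.inr (Sum.inr j) : C.Q) = four by simp [hfourdef, Subtype.ext_iff, hj])]
  | cons a u ih =>
      obtain ⟨IH1, IH2, IH3⟩ := ih
      refine ⟨fun i => ?_, fun k => ?_, fun j => ?_⟩
      · -- X block
        erw [Mword_cons_apply, split]
        have e1 : (∑ i' : {i : X.Q // i ≠ xF},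
            C.M a (Sum.inl i) (Sum.inl i') * Mword C u (Sum.inl i') four)
            = cmul (fword X i.1 xF) z (a :: u) := by
          have step : ∀ i' : {i : X.Q // i ≠ xF},
              C.M a (Sum.inl i) (Sum.inl i') * Mword C u (Sum.inl i') four
                = (if i'.1 = xI then X.M a i.1 xF * cmul (fword X xF xF) z u
                   else X.M a i.1 i'.1 * cmul (fword X i'.1 xF) z u) := by
            intro i'
            rw [IH1 i', show C.M a (Sum.inl i) (Sum.inl i')
                = (if i'.1 = xI then X.M a i.1 xF else X.M a i.1 i'.1) from rfl]
            by_cases hi' : i'.1 = xI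
            · rw [if_pos hi', if_pos hi', if_pos hi', hXF, cmul_cone_left, hi']
              congr 1
              rw [add_comm, ← hxw]
              exact (hzrec u).symm
            · rw [if_neg hi', if_neg hi', if_neg hi', add_zero]
          calc (∑ i' : {i : X.Q // i ≠ xF},
              C.M a (Sum.inl i) (Sum.inl i') * Mword C u (Sum.inl i') four)
              = ∑ i' : {i : X.Q // i ≠ xF},
                (if i'.1 = xI then X.M a i.1 xF * cmul (fword X xF xF) z u
                 else X.M a i.1 i'.1 * cmul (fword X i'.1 xF) z u) :=
                Finset.sum_congr rfl (fun q _ => step q)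
            _ = ∑ r, X.M a i.1 r * cmul (fword X r xF) z u :=
                sum_subtype_swap (fun r => X.M a i.1 r * cmul (fword X r xF) z u)
                  xI xF hxne (by simp [hxMI])
            _ = cmul (fword X i.1 xF) z (a :: u) :=
                (cmul_fword_cons X i.1 xF i.2 z a u).symm
        have e2 : (∑ l : {k : Mh.Q // k ≠ mI ∧ k ≠ mF},
            C.M a (Sum.inl i) (Sum.inr (Sum.inl l)) * Mword C u (Sum.inr (Sum.inl l)) four)
            = (if i.1 = xI then
                ∑ l : {k : Mh.Q // k ≠ mI ∧ k ≠ mF},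
                  Mh.M a mI l.1 * cmul (fword Mh l.1 mF) ys u else 0) := by
          by_cases hi : i.1 = xI
          · rw [if_pos hi]
            refine Finset.sum_congr rfl (fun l _ => ?_)
            rw [IH2 l, show C.M a (Sum.inl i) (Sum.inr (Sum.inl l))
              = (if i.1 = xI then Mh.M a mI l.1 else 0) from rfl, if_pos hi]
          · rw [if_neg hi]
            refine Finset.sum_eq_zero (fun l _ => ?_)
            rw [show C.M a (Sum.inl i) (Sum.inr (Sum.inl l))
              = (if i.1 = xI then Mh.M a mI l.1 else 0) from rfl, if_neg hi, zero_mul]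
        have e3 : (∑ q : {j : Y.Q // j ≠ yF},
            C.M a (Sum.inl i) (Sum.inr (Sum.inr q)) * Mword C u (Sum.inr (Sum.inr q)) four)
            = (if i.1 = xI then Mh.M a mI mF * cmul (fword Mh mF mF) ys u else 0) := by
          have step : ∀ q : {j : Y.Q // j ≠ yF},
              C.M a (Sum.inl i) (Sum.inr (Sum.inr q)) * Mword C u (Sum.inr (Sum.inr q)) four
                = (if q.1 = yI then
                    (if i.1 = xI then Mh.M a mI mF * cmul (fword Mh mF mF) ys u else 0)
                   else 0) := by
            intro q
            rw [IH3 q, show C.M a (Sum.inl i) (Sum.inr (Sum.inr q))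
              = (if i.1 = xI ∧ q.1 = yI then Mh.M a mI mF else 0) from rfl]
            by_cases hq : q.1 = yI
            · rw [if_pos hq]
              by_cases hi : i.1 = xI
              · rw [if_pos ⟨hi, hq⟩, if_pos hi, if_pos hq, hq, hMF, cmul_cone_left]
                congr 1
                rw [add_comm, ← hywdef]
                exact (hyrec u).symm
              · simp [hq, hi]
            · simp [hq]
          calc (∑ q : {j : Y.Q // j ≠ yF},
              C.M a (Sum.inl i) (Sum.inr (Sum.inr q)) * Mword C u (Sum.inr (Sum.inr q)) four)
              = ∑ q : {j : Y.Q // j ≠ yF},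
                (if q.1 = yI then
                  (if i.1 = xI then Mh.M a mI mF * cmul (fword Mh mF mF) ys u else 0)
                 else 0) := Finset.sum_congr rfl (fun q _ => step q)
            _ = _ := sum_subtype_single yF yI hyne _
        rw [e1, e2, e3]
        congr 1
        by_cases hi : i.1 = xI
        · rw [if_pos hi, if_pos hi, if_pos hi]
          have hTmI : Mh.M a mI mI * cmul (fword Mh mI mF) ys u = 0 := by
            rw [hmMI, zero_mul]
          calc (∑ l : {k : Mh.Q // k ≠ mI ∧ k ≠ mF},
              Mh.M a mI l.1 * cmul (fword Mh l.1 mF) ys u)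
                + Mh.M a mI mF * cmul (fword Mh mF mF) ys u
              = ∑ r, Mh.M a mI r * cmul (fword Mh r mF) ys u :=
                sum_subtype_pair (fun r => Mh.M a mI r * cmul (fword Mh r mF) ys u)
                  mI mF hmne hTmI
            _ = cmul (fword Mh mI mF) ys (a :: u) :=
                (cmul_fword_cons Mh mI mF hmne ys a u).symm
            _ = cmul mw ys (a :: u) := rfl
        · rw [if_neg hi, if_neg hi, if_neg hi, add_zero]
      · -- M block
        erw [Mword_cons_apply, split]
        have e1 : (∑ i' : {i : X.Q // i ≠ xF},
            C.M a (Sum.inr (Sum.inl k)) (Sum.inl i') * Mword C u (Sum.inl i') four) = 0 :=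
          Finset.sum_eq_zero fun q _ => by
            rw [show C.M a (Sum.inr (Sum.inl k)) (Sum.inl q) = 0 from rfl, zero_mul]
        have e2 : (∑ l : {k : Mh.Q // k ≠ mI ∧ k ≠ mF},
            C.M a (Sum.inr (Sum.inl k)) (Sum.inr (Sum.inl l))
              * Mword C u (Sum.inr (Sum.inl l)) four)
            = ∑ l : {k : Mh.Q // k ≠ mI ∧ k ≠ mF},
                Mh.M a k.1 l.1 * cmul (fword Mh l.1 mF) ys u :=
          Finset.sum_congr rfl fun l _ => by
            rw [IH2 l, show C.M a (Sum.inr (Sum.inl k)) (Sum.inr (Sum.inl l))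
              = Mh.M a k.1 l.1 from rfl]
        have e3 : (∑ q : {j : Y.Q // j ≠ yF},
            C.M a (Sum.inr (Sum.inl k)) (Sum.inr (Sum.inr q))
              * Mword C u (Sum.inr (Sum.inr q)) four)
            = Mh.M a k.1 mF * cmul (fword Mh mF mF) ys u := by
          have step : ∀ q : {j : Y.Q // j ≠ yF},
              C.M a (Sum.inr (Sum.inl k)) (Sum.inr (Sum.inr q))
                * Mword C u (Sum.inr (Sum.inr q)) four
                = (if q.1 = yI then Mh.M a k.1 mF * cmul (fword Mh mF mF) ys u else 0) := by
            intro q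
            rw [IH3 q, show C.M a (Sum.inr (Sum.inl k)) (Sum.inr (Sum.inr q))
              = (if q.1 = yI then Mh.M a k.1 mF else 0) from rfl]
            by_cases hq : q.1 = yI
            · rw [if_pos hq, if_pos hq, if_pos hq, hq, hMF, cmul_cone_left]
              congr 1
              rw [add_comm, ← hywdef]
              exact (hyrec u).symm
            · simp [hq]
          calc (∑ q : {j : Y.Q // j ≠ yF},
              C.M a (Sum.inr (Sum.inl k)) (Sum.inr (Sum.inr q))
                * Mword C u (Sum.inr (Sum.inr q)) four)
              = ∑ q : {j : Y.Q // j ≠ yF},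
                (if q.1 = yI then Mh.M a k.1 mF * cmul (fword Mh mF mF) ys u else 0) :=
                Finset.sum_congr rfl (fun q _ => step q)
            _ = _ := sum_subtype_single yF yI hyne _
        rw [e1, e2, e3, zero_add]
        have hTmI : Mh.M a k.1 mI * cmul (fword Mh mI mF) ys u = 0 := by
          rw [hmMI, zero_mul]
        calc (∑ l : {k : Mh.Q // k ≠ mI ∧ k ≠ mF},
            Mh.M a k.1 l.1 * cmul (fword Mh l.1 mF) ys u)
              + Mh.M a k.1 mF * cmul (fword Mh mF mF) ys u
            = ∑ r, Mh.M a k.1 r * cmul (fword Mh r mF) ys u :=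
              sum_subtype_pair (fun r => Mh.M a k.1 r * cmul (fword Mh r mF) ys u)
                mI mF hmne hTmI
          _ = cmul (fword Mh k.1 mF) ys (a :: u) :=
              (cmul_fword_cons Mh k.1 mF k.2.2 ys a u).symm
      · -- Y block
        erw [Mword_cons_apply, split]
        have e1 : (∑ i' : {i : X.Q // i ≠ xF},
            C.M a (Sum.inr (Sum.inr j)) (Sum.inl i') * Mword C u (Sum.inl i') four) = 0 :=
          Finset.sum_eq_zero fun q _ => by
            rw [show C.M a (Sum.inr (Sum.inr j)) (Sum.inl q) = 0 from rfl, zero_mul]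
        have e2 : (∑ l : {k : Mh.Q // k ≠ mI ∧ k ≠ mF},
            C.M a (Sum.inr (Sum.inr j)) (Sum.inr (Sum.inl l))
              * Mword C u (Sum.inr (Sum.inl l)) four) = 0 :=
          Finset.sum_eq_zero fun q _ => by
            rw [show C.M a (Sum.inr (Sum.inr j)) (Sum.inr (Sum.inl q)) = 0 from rfl, zero_mul]
        have e3 : (∑ q : {j : Y.Q // j ≠ yF},
            C.M a (Sum.inr (Sum.inr j)) (Sum.inr (Sum.inr q))
              * Mword C u (Sum.inr (Sum.inr q)) four)
            = cmul (fword Y j.1 yF) ys (a :: u) := by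
          have step : ∀ q : {j' : Y.Q // j' ≠ yF},
              C.M a (Sum.inr (Sum.inr j)) (Sum.inr (Sum.inr q))
                * Mword C u (Sum.inr (Sum.inr q)) four
                = (if q.1 = yI then Y.M a j.1 yF * cmul (fword Y yF yF) ys u
                   else Y.M a j.1 q.1 * cmul (fword Y q.1 yF) ys u) := by
            intro q
            rw [IH3 q, show C.M a (Sum.inr (Sum.inr j)) (Sum.inr (Sum.inr q))
              = (if q.1 = yI then Y.M a j.1 yF else Y.M a j.1 q.1) from rfl]
            by_cases hq : q.1 = yI
            · rw [if_pos hq, if_pos hq, if_pos hq, hq, hYF, cmul_cone_left]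
              congr 1
              rw [add_comm, ← hywdef]
              exact (hyrec u).symm
            · rw [if_neg hq, if_neg hq, if_neg hq, add_zero]
          calc (∑ q : {j' : Y.Q // j' ≠ yF},
              C.M a (Sum.inr (Sum.inr j)) (Sum.inr (Sum.inr q))
                * Mword C u (Sum.inr (Sum.inr q)) four)
              = ∑ q : {j' : Y.Q // j' ≠ yF},
                (if q.1 = yI then Y.M a j.1 yF * cmul (fword Y yF yF) ys u
                 else Y.M a j.1 q.1 * cmul (fword Y q.1 yF) ys u) :=
                Finset.sum_congr rfl (fun q _ => step q)
            _ = ∑ r, Y.M a j.1 r * cmul (fword Y r yF) ys u :=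
                sum_subtype_swap (fun r => Y.M a j.1 r * cmul (fword Y r yF) ys u)
                  yI yF hyne (by simp [hyMI])
            _ = cmul (fword Y j.1 yF) ys (a :: u) :=
                (cmul_fword_cons Y j.1 yF j.2 ys a u).symm
        rw [e1, e2, e3, zero_add, zero_add]
        simp [cone]
/-- the bidiverging behavior of the conjoin of three normalized
automata is the conjoin of their converging behaviors. -/
theorem bdivB_conjoin3WA (A S : Type) [Semiring S]
    (X : WA A S) (xI xF : X.Q) (hX : IsNormalizedAt X xI xF)
    (Mh : WA A S) (mI mF : Mh.Q) (hM : IsNormalizedAt Mh mI mF)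
    (Y : WA A S) (yI yF : Y.Q) (hY : IsNormalizedAt Y yI yF) :
    ∀ (w : ℤ → A) (i : ℤ) (n : ℕ),
      bdivB (conjoin3WA X xI xF Mh mI mF Y yI yF) w i n
        = cmul (cstar (convB X)) (cmul (convB Mh) (cstar (convB Y)))
            (bpre w i (i + n)) *
          chiZ w (cmul (cstar (convB X)) (cmul (convB Mh) (cstar (convB Y)))) := by
  obtain ⟨hxne, hxIv, hxFv, hxMI, hxMF⟩ := hX
  obtain ⟨hmne, hmIv, hmFv, hmMI, hmMF⟩ := hM
  obtain ⟨hyne, hyIv, hyFv, hyMI, hyMF⟩ := hY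
  intro w iw n
  have hcx : convB X = fword X xI xF :=
    convB_normalizedAt X xI xF ⟨hxne, hxIv, hxFv, hxMI, hxMF⟩
  have hcm : convB Mh = fword Mh mI mF :=
    convB_normalizedAt Mh mI mF ⟨hmne, hmIv, hmFv, hmMI, hmMF⟩
  have hcy : convB Y = fword Y yI yF :=
    convB_normalizedAt Y yI yF ⟨hyne, hyIv, hyFv, hyMI, hyMF⟩
  have hx0 : fword X xI xF [] = 0 := by rw [fword_nil]; exact if_neg hxne
  set C := conjoin3WA X xI xF Mh mI mF Y yI yF with hC
  set one : C.Q := Sum.inl ⟨xI, hxne⟩ with hone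
  set four : C.Q := Sum.inr (Sum.inr ⟨yI, hyne⟩) with hfour
  have hmain := conjoin3_main X xI xF Mh mI mF Y yI yF hxne hxMI hxMF hmne hmMI
    hmMF hyne hyMI hyMF
  have hM14 : ∀ u : List A, Mword C u one four
      = cmul (cstar (convB X)) (cmul (convB Mh) (cstar (convB Y))) u := by
    intro u
    have h1 := (hmain u).1 ⟨xI, hxne⟩
    simp only [show ((⟨xI, hxne⟩ : {i : X.Q // i ≠ xF}) : X.Q) = xI from rfl,
      if_pos rfl] at h1
    rw [hcx, hcm, hcy]
    calc Mword C u one four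
        = cmul (fword X xI xF)
            (cmul (cstar (fword X xI xF))
              (cmul (fword Mh mI mF) (cstar (fword Y yI yF)))) u
          + cmul (fword Mh mI mF) (cstar (fword Y yI yF)) u := h1
      _ = cmul (cstar (fword X xI xF))
            (cmul (fword Mh mI mF) (cstar (fword Y yI yF))) u := by
          rw [add_comm]
          exact (cmul_star_left (fword X xI xF) _ hx0 u).symm
  have hI0 : ∀ p : C.Q, p ≠ one → C.I p = 0 := by
    intro p hp
    rcases p with q | (q | q)
    · by_cases hxi : q.1 = xI
      · exact absurd (by rw [hone]; exact congrArg Sum.inl (Subtype.ext hxi)) hp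
      · rw [show C.I (Sum.inl q) = (if q.1 = xI then 1 else 0) from rfl, if_neg hxi]
    · rfl
    · rfl
  have hF0 : ∀ p : C.Q, p ≠ four → C.F p = 0 := by
    intro p hp
    rcases p with q | (q | q)
    · rfl
    · rfl
    · by_cases hyi : q.1 = yI
      · exact absurd (by
          rw [hfour]
          exact congrArg Sum.inr (congrArg Sum.inr (Subtype.ext hyi))) hp
      · rw [show C.F (Sum.inr (Sum.inr q)) = (if q.1 = yI then 1 else 0) from rfl,
          if_neg hyi]
  have hbd : bdivB C w iw n
      = (if BActivated C w one four then Mword C (bpre w iw (iw + n)) one four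
         else 0) := by
    show (∑ p : C.Q × C.Q,
        if BActivated C w p.1 p.2 then
          C.I p.1 * Mword C (bpre w iw (iw + n)) p.1 p.2 * C.F p.2 else 0) = _
    rw [Finset.sum_eq_single (one, four)]
    · have h1 : C.I one = 1 := by
        rw [hone]; exact if_pos rfl
      have h2 : C.F four = 1 := by
        rw [hfour]; exact if_pos rfl
      rw [h1, h2, one_mul, mul_one]
    · intro b _ hb
      have hIF : C.I b.1 = 0 ∨ C.F b.2 = 0 := by
        by_cases h1 : b.1 = one
        · refine Or.inr (hF0 _ ?_)
          intro h2
          exact hb (Prod.ext h1 h2)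
        · exact Or.inl (hI0 _ h1)
      rcases hIF with h | h
      · rw [h, zero_mul, zero_mul, ite_self]
      · rw [h, mul_zero, ite_self]
    · intro h
      exact absurd (Finset.mem_univ _) h
  have hcond : BActivated C w one four ↔
      (∀ i₀ j₀ : ℤ, i₀ ≤ j₀ → ∃ i' ≤ i₀, ∃ j, j₀ ≤ j ∧
        cmul (cstar (convB X)) (cmul (convB Mh) (cstar (convB Y))) (bpre w i' j) ≠ 0) := by
    constructor
    · intro h i₀ j₀ h0
      obtain ⟨i', hi', j, hj, hne0⟩ := h i₀ j₀ h0
      exact ⟨i', hi', j, hj, by rwa [hM14] at hne0⟩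
    · intro h i₀ j₀ h0
      obtain ⟨i', hi', j, hj, hne0⟩ := h i₀ j₀ h0
      refine ⟨i', hi', j, hj, ?_⟩
      rw [hM14 (bpre w i' j)]
      exact hne0
  rw [hbd, hM14, chiZ]
  by_cases hA : BActivated C w one four
  · rw [if_pos hA, if_pos (hcond.1 hA), mul_one]
  · rw [if_neg hA, if_neg (fun hc => hA (hcond.2 hc)), mul_zero]
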